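/- In the Pöppe algebra of compositions, the product of the order-one signature expansion with itself is $\widehat{\underline{1}} * \widehat{\underline{1}} = 21 + 12 + 2\cdot 111$, and consequently the single-letter composition $3$ satisfies $3 = \widehat{\underline{3}} - 3\cdot(\widehat{\underline{1}} * \widehat{\underline{1}})$, where $\widehat{\underline{3}} = 3 + 3\cdot 21 + 3\cdot 12 + 6\cdot 111$. This is the combinatorial-algebra statement of integrability of the (potential) Korteweg–de Vries equation. -/

import Mathlib

open Finset

/-- The set of compositions of `n` (lists of positive integers summing to `n`). -/
def comps : ℕ → Finset (List ℕ+)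
  | 0 => {[]}
  | n + 1 =>
    (Finset.range (n + 1)).attach.biUnion fun k =>
      (comps k.1).image fun l =>
        (⟨n + 1 - k.1, Nat.sub_pos_of_lt (Finset.mem_range.mp k.2)⟩ : ℕ+) :: l
  decreasing_by exact Finset.mem_range.mp k.2

/-- Signature character of a composition. -/
def chi : List ℕ+ → ℕ
  | [] => 1
  | a :: t => Nat.choose ((a : ℕ) + (t.map fun x => (x : ℕ)).sum) (a : ℕ) * chi t

/-- The Pöppe product of two basis compositions `u a` and `b v`:
`(u a) * (b v) = u(a+1)bv + ua(b+1)v + 2·(ua1bv)`, as an element of the free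
vector space on compositions (zero if either composition is empty). -/
noncomputable def ppWord (u v : List ℕ+) : List ℕ+ →₀ ℝ :=
  match u.reverse, v with
  | a :: ur, b :: v' =>
      Finsupp.single (((a + 1) :: ur).reverse ++ b :: v') 1
      + Finsupp.single ((a :: ur).reverse ++ (b + 1) :: v') 1
      + (2 : ℝ) • Finsupp.single ((a :: ur).reverse ++ (1 : ℕ+) :: b :: v') 1
  | _, _ => 0

/-- The bilinear Pöppe product on the free vector space on compositions. -/
noncomputable def poppeMul (x y : List ℕ+ →₀ ℝ) : List ℕ+ →₀ ℝ :=
  x.sum fun u cu => y.sum fun v cv => (cu * cv) • ppWord u v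

/-- The signature expansion of order `n`: `∑_{w ⊨ n} χ(w)·w`. -/
noncomputable def sigExp (n : ℕ) : List ℕ+ →₀ ℝ :=
  ∑ w ∈ comps n, (chi w : ℝ) • Finsupp.single w 1

/-- The derivation of a single composition: the sum of all single-letter increments
plus the sum of all insertions of a letter `1` into the gaps. -/
noncomputable def derWord (w : List ℕ+) : List ℕ+ →₀ ℝ :=
  (∑ k ∈ Finset.range w.length,
      Finsupp.single (w.take k ++ (w.getD k 1 + 1) :: w.drop (k + 1)) (1 : ℝ))
  + ∑ k ∈ Finset.range (w.length + 1),
      Finsupp.single (w.take k ++ (1 : ℕ+) :: w.drop k) (1 : ℝ)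

/-- The derivation, extended linearly to the free vector space on compositions. -/
noncomputable def der (x : List ℕ+ →₀ ℝ) : List ℕ+ →₀ ℝ :=
  x.sum fun w c => c • derWord w


lemma comps_succ (n : ℕ) : comps (n+1) =
    (Finset.range (n+1)).biUnion fun k =>
      (comps k).image (β := List ℕ+) fun l => (⟨n - k + 1, Nat.succ_pos _⟩ : ℕ+) :: l := by
  rw [comps.eq_2]
  ext w
  simp only [Finset.mem_biUnion, Finset.mem_attach, Finset.mem_image, true_and,
    Subtype.exists, Finset.mem_range]
  constructor
  · rintro ⟨k, hk, l, hl, rfl⟩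
    exact ⟨k, hk, l, hl, by congr 1; exact PNat.coe_injective (by simp; omega)⟩
  · rintro ⟨k, hk, l, hl, rfl⟩
    exact ⟨k, hk, l, hl, by congr 1; exact PNat.coe_injective (by simp [Nat.sub_pos_of_lt hk]; omega)⟩

lemma c0 : comps 0 = {[]} := by rw [comps]
lemma c1 : comps 1 = {[(1:ℕ+)]} := by
  rw [comps_succ]
  simp only [Finset.range_add_one, Finset.range_zero, Finset.biUnion_insert, Finset.biUnion_empty, c0]
  decide
lemma c2 : comps 2 = {[(2:ℕ+)], [(1:ℕ+),1]} := by
  rw [comps_succ]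
  simp only [Finset.range_add_one, Finset.range_zero, Finset.biUnion_insert, Finset.biUnion_empty, c0, c1]
  decide
lemma c3 : comps 3 = {[(3:ℕ+)], [(2:ℕ+),1], [(1:ℕ+),2], [(1:ℕ+),1,1]} := by
  rw [comps_succ]
  simp only [Finset.range_add_one, Finset.range_zero, Finset.biUnion_insert, Finset.biUnion_empty, c0, c1, c2]
  decide

lemma sig1 : sigExp 1 = Finsupp.single [(1:ℕ+)] 1 := by
  rw [sigExp, c1]
  simp [chi]

lemma sig3 : sigExp 3
    = Finsupp.single [(3 : ℕ+)] 1 + (3 : ℝ) • Finsupp.single [(2 : ℕ+), 1] 1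
      + (3 : ℝ) • Finsupp.single [(1 : ℕ+), 2] 1
      + (6 : ℝ) • Finsupp.single [(1 : ℕ+), 1, 1] 1 := by
  rw [sigExp, c3]
  rw [show ({[(3:ℕ+)], [(2:ℕ+),1], [(1:ℕ+),2], [(1:ℕ+),1,1]} : Finset (List ℕ+))
    = insert [(3:ℕ+)] (insert [(2:ℕ+),1] (insert [(1:ℕ+),2] {[(1:ℕ+),1,1]})) from rfl]
  rw [Finset.sum_insert (by decide), Finset.sum_insert (by decide),
    Finset.sum_insert (by decide), Finset.sum_singleton]
  have h1 : chi [(3:ℕ+)] = 1 := by decide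
  have h2 : chi [(2:ℕ+),1] = 3 := by decide
  have h3 : chi [(1:ℕ+),2] = 3 := by decide
  have h4 : chi [(1:ℕ+),1,1] = 6 := by decide
  rw [h1, h2, h3, h4]
  push_cast
  module

lemma pp11 : poppeMul (sigExp 1) (sigExp 1)
    = Finsupp.single [(2 : ℕ+), 1] 1 + Finsupp.single [(1 : ℕ+), 2] 1
      + (2 : ℝ) • Finsupp.single [(1 : ℕ+), 1, 1] 1 := by
  rw [sig1, poppeMul]
  rw [Finsupp.sum_single_index (by simp), Finsupp.sum_single_index (by simp)]
  rw [show ppWord [(1:ℕ+)] [(1:ℕ+)]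
    = Finsupp.single [(2:ℕ+),1] 1 + Finsupp.single [(1:ℕ+),2] 1
      + (2:ℝ) • Finsupp.single [(1:ℕ+),1,1] 1 from rfl]
  simp

/-- KdV integrability in the Pöppe algebra: `1̂ * 1̂ = 21 + 12 + 2·111`,
`3̂ = 3 + 3·21 + 3·12 + 6·111`, and consequently `3 = 3̂ - 3·(1̂ * 1̂)`. -/
theorem kdv_third_order :
    poppeMul (sigExp 1) (sigExp 1)
      = Finsupp.single [(2 : ℕ+), 1] 1 + Finsupp.single [(1 : ℕ+), 2] 1
        + (2 : ℝ) • Finsupp.single [(1 : ℕ+), 1, 1] 1 ∧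
    sigExp 3
      = Finsupp.single [(3 : ℕ+)] 1 + (3 : ℝ) • Finsupp.single [(2 : ℕ+), 1] 1
        + (3 : ℝ) • Finsupp.single [(1 : ℕ+), 2] 1
        + (6 : ℝ) • Finsupp.single [(1 : ℕ+), 1, 1] 1 ∧
    Finsupp.single [(3 : ℕ+)] (1 : ℝ)
      = sigExp 3 - (3 : ℝ) • poppeMul (sigExp 1) (sigExp 1) := by
  refine ⟨pp11, sig3, ?_⟩
  rw [sig3, pp11]
  module
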